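/- Let w_min < w_max be real numbers, and let (W_n)_{n∈ℕ} and W* be random variables taking values in [w_min, w_max] almost surely, with W_n → W* in probability. Let μ denote the law of W*. Let g : [w_min, w_max] → ℝ be Borel measurable with discontinuity set D := { w ∈ [w_min, w_max] : g is discontinuous at w }, and assume μ(D) = 0. Let (g_n)_{n∈ℕ} be Borel measurable functions on [w_min, w_max] and suppose there exist open sets (U_j)_{j∈ℕ} in ℝ with D ⊆ U_j, μ(U_j) < 1/j, μ(∂U_j) = 0, and such that for every j, sup_{w ∈ [w_min, w_max] \ U_j} |g_n(w) − g(w)| → 0 as n → ∞. Then g_n(W_n) → g(W*) in probability. -/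

import Mathlib

open Filter MeasureTheory ENNReal

/-- Moving-input stability (scalar case): if `W n → W*` in probability, the
discontinuity set `D` of `g` on `[w_min, w_max]` is null under the law `μ` of `W*`,
and `g n → g` uniformly on the complements `[w_min, w_max] \ U j` of open sets
`U j ⊇ D` with `μ (U j) < 1/j` and `μ (∂ U j) = 0`, then
`g n (W n) → g (W*)` in probability. -/
theorem moving_input_stability_scalar
    {Ω : Type*} [MeasurableSpace Ω] (P : Measure Ω) [IsProbabilityMeasure P]
    (wmin wmax : ℝ) (hw : wmin < wmax)
    (Wn : ℕ → Ω → ℝ) (hWn : ∀ n, Measurable (Wn n))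
    (Wstar : Ω → ℝ) (hWstar : Measurable Wstar)
    (hWnmem : ∀ n, ∀ᵐ ω ∂P, Wn n ω ∈ Set.Icc wmin wmax)
    (hWsmem : ∀ᵐ ω ∂P, Wstar ω ∈ Set.Icc wmin wmax)
    (hconv : ∀ ε : ℝ, 0 < ε →
      Tendsto (fun n => P {ω | ε < |Wn n ω - Wstar ω|}) atTop (nhds 0))
    (g : ℝ → ℝ) (hg : Measurable g)
    (D : Set ℝ)
    (hD : D = {w ∈ Set.Icc wmin wmax | ¬ ContinuousWithinAt g (Set.Icc wmin wmax) w})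
    (hDnull : P.map Wstar D = 0)
    (gn : ℕ → ℝ → ℝ) (hgn : ∀ n, Measurable (gn n))
    (U : ℕ → Set ℝ)
    (hUopen : ∀ j, IsOpen (U j))
    (hUD : ∀ j, D ⊆ U j)
    (hUsmall : ∀ j : ℕ, P.map Wstar (U j) < 1 / ((j : ℝ≥0∞) + 1))
    (hUbd : ∀ j, P.map Wstar (frontier (U j)) = 0)
    (hunif : ∀ j, TendstoUniformlyOn gn g atTop (Set.Icc wmin wmax \ U j)) :
    ∀ ε : ℝ, 0 < ε →
      Tendsto (fun n => P {ω | ε < |gn n (Wn n ω) - g (Wstar ω)|}) atTop (nhds 0) := by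
  intro ε hε
  rw [ENNReal.tendsto_atTop_zero]
  intro δ hδ
  have hδ4 : (0:ℝ≥0∞) < δ / 4 := ENNReal.div_pos hδ.ne' (by norm_num)
  -- choose j with 1/(j+1) < δ/4
  obtain ⟨j, hj⟩ : ∃ j : ℕ, 1 / ((j : ℝ≥0∞) + 1) < δ / 4 := by
    obtain ⟨n, hn⟩ := ENNReal.exists_inv_nat_lt hδ4.ne'
    refine ⟨n, lt_of_le_of_lt ?_ hn⟩
    rw [one_div]
    exact ENNReal.inv_le_inv.mpr (le_add_of_nonneg_right zero_le_one) |>.trans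
      (le_of_eq rfl)
  set K : Set ℝ := Set.Icc wmin wmax \ U j with hK
  have hKcomp : IsCompact K := isCompact_Icc.diff (hUopen j)
  have hgK : ContinuousOn g K := by
    intro w hw
    have hcw : ContinuousWithinAt g (Set.Icc wmin wmax) w := by
      by_contra h
      exact hw.2 (hUD j (by rw [hD]; exact ⟨hw.1, h⟩))
    exact hcw.mono Set.diff_subset
  have huc := hKcomp.uniformContinuousOn_of_continuous hgK
  rw [Metric.uniformContinuousOn_iff] at huc
  obtain ⟨η₂, hη₂pos, hη₂⟩ := huc (ε / 2) (half_pos hε)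
  haveI : IsProbabilityMeasure (P.map Wstar) := Measure.isProbabilityMeasure_map hWstar.aemeasurable
  have hclos : P.map Wstar (closure (U j)) < δ / 4 := by
    have hsubc : closure (U j) ⊆ U j ∪ frontier (U j) := by
      intro x hx
      by_cases hxU : x ∈ U j
      · exact Or.inl hxU
      · exact Or.inr (by rw [(hUopen j).frontier_eq]; exact ⟨hx, hxU⟩)
    calc P.map Wstar (closure (U j)) ≤ P.map Wstar (U j) + P.map Wstar (frontier (U j)) :=
          le_trans (measure_mono hsubc) (measure_union_le _ _)
      _ = P.map Wstar (U j) := by rw [hUbd j, add_zero]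
      _ < 1 / ((j : ℝ≥0∞) + 1) := hUsmall j
      _ < δ / 4 := hj
  have hth := tendsto_measure_cthickening (μ := P.map Wstar) (s := U j)
    ⟨1, one_pos, measure_ne_top _ _⟩
  have hth' := hth.mono_left (nhdsWithin_le_nhds (s := Set.Ioi (0:ℝ)))
  obtain ⟨η₁, hη₁lt, hη₁pos⟩ :=
    ((hth'.eventually_lt_const hclos).and eventually_mem_nhdsWithin).exists
  rw [Set.mem_Ioi] at hη₁pos
  -- eventual bounds in n
  have e1 : ∀ᶠ n in atTop, P {ω | η₁ < |Wn n ω - Wstar ω|} < δ / 4 :=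
    (hconv η₁ hη₁pos).eventually_lt_const hδ4
  have e2 : ∀ᶠ n in atTop, P {ω | η₂ / 2 < |Wn n ω - Wstar ω|} < δ / 4 :=
    (hconv (η₂ / 2) (half_pos hη₂pos)).eventually_lt_const hδ4
  have e3 : ∀ᶠ n in atTop, ∀ x ∈ K, dist (g x) (gn n x) < ε / 2 :=
    (Metric.tendstoUniformlyOn_iff.mp (hunif j)) (ε / 2) (half_pos hε)
  obtain ⟨N, hN⟩ := Filter.eventually_atTop.mp ((e1.and e2).and e3)
  refine ⟨N, fun n hn => ?_⟩
  obtain ⟨⟨h1n, h2n⟩, h3n⟩ := hN n hn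
  set A := {ω | Wn n ω ∉ Set.Icc wmin wmax}
  set B := {ω | Wstar ω ∉ Set.Icc wmin wmax}
  set C := {ω | Wstar ω ∈ Metric.cthickening η₁ (U j)}
  set Dn := {ω | η₁ < |Wn n ω - Wstar ω|}
  set E := {ω | Wstar ω ∈ U j}
  set F := {ω | η₂ / 2 < |Wn n ω - Wstar ω|}
  have hA : P A = 0 := by
    have := hWnmem n
    rwa [ae_iff] at this
  have hB : P B = 0 := by
    rwa [ae_iff] at hWsmem
  have hC : P C ≤ δ / 4 := by
    have : P C = P.map Wstar (Metric.cthickening η₁ (U j)) := by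
      rw [Measure.map_apply hWstar Metric.isClosed_cthickening.measurableSet]; rfl
    rw [this]; exact hη₁lt.le
  have hE : P E ≤ δ / 4 := by
    have : P E = P.map Wstar (U j) := by
      rw [Measure.map_apply hWstar (hUopen j).measurableSet]; rfl
    rw [this]
    exact le_of_lt (lt_trans (hUsmall j) hj)
  have hsub : {ω | ε < |gn n (Wn n ω) - g (Wstar ω)|} ⊆ A ∪ B ∪ C ∪ Dn ∪ E ∪ F := by
    intro ω hω
    by_contra hc
    simp only [A, B, C, Dn, E, F, Set.mem_union, Set.mem_setOf_eq, not_or, not_lt,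
      not_not] at hc
    obtain ⟨⟨⟨⟨⟨h1, h2⟩, h3⟩, h4⟩, h5⟩, h6⟩ := hc
    have hWnU : Wn n ω ∉ U j := by
      intro hmem
      refine h3 (Metric.mem_cthickening_of_dist_le (Wstar ω) (Wn n ω) η₁ (U j) hmem ?_)
      rw [Real.dist_eq, abs_sub_comm]
      exact h4
    have hWnK : Wn n ω ∈ K := ⟨h1, hWnU⟩
    have hWsK : Wstar ω ∈ K := ⟨h2, h5⟩
    have hdist : dist (Wn n ω) (Wstar ω) < η₂ := by
      rw [Real.dist_eq]
      linarith [h6]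
    have hgg : dist (g (Wn n ω)) (g (Wstar ω)) < ε / 2 := hη₂ _ hWnK _ hWsK hdist
    have hgng : dist (g (Wn n ω)) (gn n (Wn n ω)) < ε / 2 := h3n _ hWnK
    have : dist (gn n (Wn n ω)) (g (Wstar ω)) < ε := by
      calc dist (gn n (Wn n ω)) (g (Wstar ω))
          ≤ dist (gn n (Wn n ω)) (g (Wn n ω)) + dist (g (Wn n ω)) (g (Wstar ω)) :=
            dist_triangle _ _ _
        _ < ε / 2 + ε / 2 := by rw [dist_comm (gn n (Wn n ω))]; exact add_lt_add hgng hgg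
        _ = ε := add_halves ε
    rw [Real.dist_eq] at this
    exact absurd hω (by simp only [Set.mem_setOf_eq, not_lt]; exact this.le)
  calc P {ω | ε < |gn n (Wn n ω) - g (Wstar ω)|} ≤ P (A ∪ B ∪ C ∪ Dn ∪ E ∪ F) :=
        measure_mono hsub
    _ ≤ P (A ∪ B ∪ C ∪ Dn ∪ E) + P F := measure_union_le _ _
    _ ≤ (P (A ∪ B ∪ C ∪ Dn) + P E) + P F := by gcongr; exact measure_union_le _ _
    _ ≤ ((P (A ∪ B ∪ C) + P Dn) + P E) + P F :=
        by gcongr; exact measure_union_le _ _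
    _ ≤ (((P (A ∪ B) + P C) + P Dn) + P E) + P F :=
        by gcongr; exact measure_union_le _ _
    _ ≤ ((((P A + P B) + P C) + P Dn) + P E) + P F :=
        by gcongr; exact measure_union_le _ _
    _ ≤ ((((0 + 0) + δ / 4) + δ / 4) + δ / 4) + δ / 4 :=
        add_le_add (add_le_add (add_le_add (add_le_add (add_le_add hA.le hB.le) hC)
          h1n.le) hE) h2n.le
    _ = δ := by
        rw [zero_add, zero_add, ENNReal.div_add_div_same, ENNReal.div_add_div_same,
          ENNReal.div_add_div_same]
        have h4 : δ + δ + δ + δ = δ * 4 := by ring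
        rw [h4, mul_div_assoc, ENNReal.div_self (by norm_num) (by norm_num), mul_one]
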